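/- arXiv:1603.08012 — 4 statements merged into one kernel-verified Lean document; each statement's English description precedes it below -/
import Mathlib

section
/- Let f be a complex-valued Schwartz function on ℝ⁴ and let M > 0 be such that for every multi-index w ∈ ℕ⁴ and every p ∈ ℝ⁴ the iterated partial derivative satisfies ‖∂^w f(p)‖ ≤ M^{−|w|} ‖f(p)‖, where |w| = w₁+w₂+w₃+w₄. Then for every k ∈ ℕ, every coordinate direction α ∈ {1,2,3,4} and every x ∈ ℝ⁴ with x_α ≠ 0, one has ‖∫_{ℝ⁴} e^{−i⟨x,p⟩} f(p) dp‖ ≤ (|x_α| · M)^{−k} · ∫_{ℝ⁴} ‖f(p)‖ dp. -/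
open MeasureTheory FourierTransform Real RealInnerProductSpace

abbrev E4 := EuclideanSpace ℝ (Fin 4)

/-- Partial derivative in coordinate direction `i`. -/
noncomputable def pd (i : Fin 4) (f : E4 → ℂ) : E4 → ℂ :=
  fun p => fderiv ℝ f p (EuclideanSpace.single i 1)

/-- Iterated partial derivative `∂^w` for a multi-index `w : ℕ⁴`. -/
noncomputable def pdMulti (w : Fin 4 → ℕ) (f : E4 → ℂ) : E4 → ℂ :=
  (pd 0)^[w 0] ((pd 1)^[w 1] ((pd 2)^[w 2] ((pd 3)^[w 3] f)))

noncomputable def Dop (α : Fin 4) : SchwartzMap E4 ℂ →L[ℝ] SchwartzMap E4 ℂ :=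
  LineDeriv.lineDerivOpCLM ℝ (SchwartzMap E4 ℂ) (EuclideanSpace.single α (1 : ℝ))

lemma coe_Dop_iter (α : Fin 4) (k : ℕ) (f : SchwartzMap E4 ℂ) :
    ⇑((Dop α)^[k] f) = (pd α)^[k] ⇑f := by
  induction k with
  | zero => rfl
  | succ k ih =>
    rw [Function.iterate_succ_apply', Function.iterate_succ_apply', ← ih]
    funext p
    simp [Dop, LineDeriv.lineDerivOpCLM_apply, SchwartzMap.lineDerivOp_apply_eq_fderiv, pd]

lemma fourier_step (g : SchwartzMap E4 ℂ) (ξ : E4) (α : Fin 4) :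
    𝓕 ⇑(Dop α g) ξ = (2 * π * Complex.I * (ξ α)) * 𝓕 ⇑g ξ := by
  have hint : Integrable (fderiv ℝ ⇑g) volume := by
    have := (SchwartzMap.fderivCLM ℝ E4 ℂ g).integrable (μ := volume)
    have he : ⇑(SchwartzMap.fderivCLM ℝ E4 ℂ g) = fderiv ℝ ⇑g := by
      funext p; exact SchwartzMap.fderivCLM_apply ℝ g p
    rwa [he] at this
  have h1 : 𝓕 ⇑(Dop α g) ξ = 𝓕 (fderiv ℝ ⇑g) ξ (EuclideanSpace.single α 1) := by
    rw [Real.fourier_continuousLinearMap_apply hint]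
    rfl
  rw [h1, Real.fourier_fderiv g.integrable g.differentiable hint]
  simp [VectorFourier.fourierSMulRight_apply, real_inner_smul_right, innerSL_apply_apply,
    EuclideanSpace.inner_single_right, smul_eq_mul]
  have hi : ((innerSL ℝ ξ) (EuclideanSpace.single α 1) : ℝ) = ξ α := by
    rw [show (innerSL ℝ ξ) (EuclideanSpace.single α 1) = inner ℝ ξ (EuclideanSpace.single α (1:ℝ))
      from rfl, EuclideanSpace.inner_single_right]
    simp
  rw [hi]
  ring

lemma norm_step (f : SchwartzMap E4 ℂ) (k : ℕ) (α : Fin 4) (x : E4) :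
    ‖𝓕 ⇑((Dop α)^[k] f) ((2 * π)⁻¹ • x)‖ = |x α| ^ k * ‖𝓕 ⇑f ((2 * π)⁻¹ • x)‖ := by
  induction k with
  | zero => simp
  | succ k ih =>
    rw [Function.iterate_succ_apply', fourier_step]
    have hξ : ((2 * π)⁻¹ • x : E4) α = (2 * π)⁻¹ * x α := rfl
    rw [norm_mul, ih, hξ]
    have h2π : (2 * π) ≠ 0 := by positivity
    have : ‖(2 * ↑π * Complex.I * ((2 * π)⁻¹ * x α : ℝ))‖ = |x α| := by
      simp [norm_mul, Complex.norm_real, Real.norm_eq_abs, abs_of_pos Real.pi_pos,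
        abs_mul, abs_inv]
      field_simp
    rw [this]; ring

lemma pdMulti_single (α : Fin 4) (k : ℕ) (g : E4 → ℂ) :
    pdMulti (fun i => if i = α then k else 0) g = (pd α)^[k] g := by
  fin_cases α <;> simp [pdMulti]

theorem stmt1 (f : SchwartzMap E4 ℂ) (M : ℝ) (hM : 0 < M)
    (hf : ∀ (w : Fin 4 → ℕ) (p : E4),
      ‖pdMulti w (fun q => f q) p‖ ≤ M ^ (-(∑ i, w i : ℤ)) * ‖f p‖)
    (k : ℕ) (α : Fin 4) (x : E4) (hx : x α ≠ 0) :
    ‖∫ p : E4, Complex.exp (-Complex.I * ((inner ℝ x p : ℝ) : ℂ)) * f p‖ ≤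
      (|x α| * M) ^ (-(k : ℤ)) * ∫ p : E4, ‖f p‖ := by
  set ξ : E4 := (2 * π)⁻¹ • x with hξdef
  have h2π : (2 * π : ℝ) ≠ 0 := by positivity
  -- Step 1: identify the integral with the Fourier transform at ξ
  have hLHS : ∫ p : E4, Complex.exp (-Complex.I * ((inner ℝ x p : ℝ) : ℂ)) * f p
      = 𝓕 ⇑f ξ := by
    rw [Real.fourier_eq']
    congr 1; funext p
    rw [smul_eq_mul]
    congr 1
    have h1 : (inner ℝ p ξ : ℝ) = (2 * π)⁻¹ * (inner ℝ x p : ℝ) := by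
      rw [hξdef, real_inner_smul_right, real_inner_comm]
    have h2 : (-2 * π * (inner ℝ p ξ : ℝ) : ℝ) = -(inner ℝ x p : ℝ) := by
      rw [h1]; field_simp
    rw [h2]
    push_cast
    ring
  -- Step 2: pointwise bound for the k-th derivative
  have hpt : ∀ p : E4, ‖((Dop α)^[k] f) p‖ ≤ M ^ (-(k : ℤ)) * ‖f p‖ := by
    intro p
    have h := hf (fun i => if i = α then k else 0) p
    rw [pdMulti_single, ← coe_Dop_iter] at h
    simpa [Finset.sum_ite_eq'] using h
  -- Step 3: integral bound
  have hint1 : Integrable (fun p => ‖((Dop α)^[k] f) p‖) volume :=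
    ((Dop α)^[k] f).integrable.norm
  have hint2 : Integrable (fun p => M ^ (-(k : ℤ)) * ‖f p‖) volume :=
    (f.integrable (μ := volume)).norm.const_mul _
  have hmono : ∫ p, ‖((Dop α)^[k] f) p‖ ≤ M ^ (-(k : ℤ)) * ∫ p : E4, ‖f p‖ := by
    calc ∫ p, ‖((Dop α)^[k] f) p‖ ≤ ∫ p, M ^ (-(k : ℤ)) * ‖f p‖ :=
          integral_mono hint1 hint2 hpt
      _ = M ^ (-(k : ℤ)) * ∫ p : E4, ‖f p‖ := integral_const_mul _ _
  -- Step 4: Fourier transform norm bound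
  have hFnorm : ‖𝓕 ⇑((Dop α)^[k] f) ξ‖ ≤ ∫ p, ‖((Dop α)^[k] f) p‖ := by
    rw [Real.fourier_eq]
    calc ‖∫ v, 𝐞 (-(inner ℝ v ξ : ℝ)) • ((Dop α)^[k] f) v‖
        ≤ ∫ v, ‖𝐞 (-(inner ℝ v ξ : ℝ)) • ((Dop α)^[k] f) v‖ := norm_integral_le_integral_norm _
      _ = ∫ p, ‖((Dop α)^[k] f) p‖ := by simp [norm_smul]
  -- Step 5: combine
  have hxpos : (0 : ℝ) < |x α| := abs_pos.2 hx
  have hstep := norm_step f k α x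
  rw [hLHS]
  have hEq : ‖𝓕 ⇑f ξ‖ = (|x α| ^ k)⁻¹ * ‖𝓕 ⇑((Dop α)^[k] f) ξ‖ := by
    rw [show ξ = (2 * π)⁻¹ • x from rfl, hstep,
      inv_mul_cancel_left₀ (by positivity : |x α| ^ k ≠ 0)]
  rw [hEq]
  have hMnonneg : (0:ℝ) ≤ M ^ (-(k : ℤ)) := by positivity
  calc (|x α| ^ k)⁻¹ * ‖𝓕 ⇑((Dop α)^[k] f) ξ‖
      ≤ (|x α| ^ k)⁻¹ * (M ^ (-(k : ℤ)) * ∫ p : E4, ‖f p‖) := by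
        apply mul_le_mul_of_nonneg_left (le_trans hFnorm hmono)
        positivity
    _ = (|x α| * M) ^ (-(k : ℤ)) * ∫ p : E4, ‖f p‖ := by
        rw [zpow_neg, zpow_natCast, zpow_neg, zpow_natCast, mul_pow, mul_inv]
        ring
end

section
/- For all natural numbers k, l and every real number m < −1 there exists a polynomial P in two variables with nonnegative real coefficients (depending only on k, l, m) such that for all real numbers a₀, a₁, A, K, L with 0 < a₀ ≤ a₁, A ≥ 0, K ≥ 0 and L > 0, one has ∫_{a₀}^{a₁} max(A,x)^m · (ln₊(K/x))^k · (ln₊(x/L))^l dx ≤ max(A,a₀)^{m+1} · P( ln₊( max(K,A) / max(a₀, min(A,L)) ), ln₊(a₀/L) ). -/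
/-- The positive part of the logarithm: `ln₊ x = log (max x 1)`. -/
noncomputable def lnp (x : ℝ) : ℝ := Real.log (max x 1)

lemma lnp_nonneg (x : ℝ) : 0 ≤ lnp x := Real.log_nonneg (le_max_right _ _)

lemma lnp_mono {x y : ℝ} (h : x ≤ y) : lnp x ≤ lnp y :=
  Real.log_le_log (lt_of_lt_of_le one_pos (le_max_right _ _)) (max_le_max h le_rfl)

lemma lnp_eq_zero {x : ℝ} (h : x ≤ 1) : lnp x = 0 := by
  rw [lnp, max_eq_right h, Real.log_one]

lemma lnp_eq_log {x : ℝ} (h : 1 ≤ x) : lnp x = Real.log x := by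
  rw [lnp, max_eq_left h]

lemma lnp_mul_le {x y : ℝ} (hx : 0 ≤ x) (hy : 0 ≤ y) : lnp (x * y) ≤ lnp x + lnp y := by
  have hx1 : (0:ℝ) < max x 1 := lt_of_lt_of_le one_pos (le_max_right _ _)
  have hy1 : (0:ℝ) < max y 1 := lt_of_lt_of_le one_pos (le_max_right _ _)
  have h1 : max (x * y) 1 ≤ max x 1 * max y 1 := by
    apply max_le
    · exact mul_le_mul (le_max_left _ _) (le_max_left _ _) hy hx1.le
    · nlinarith [le_max_right x 1, le_max_right y 1]
  calc lnp (x * y) ≤ Real.log (max x 1 * max y 1) :=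
        Real.log_le_log (lt_of_lt_of_le one_pos (le_max_right _ _)) h1
    _ = lnp x + lnp y := Real.log_mul hx1.ne' hy1.ne'

lemma lnp_max (x y : ℝ) : lnp (max x y) = max (lnp x) (lnp y) := by
  rcases max_cases x y with ⟨h1, h2⟩ | ⟨h1, h2⟩ <;> rw [h1]
  · exact (max_eq_left (lnp_mono h2)).symm
  · exact (max_eq_right (lnp_mono h2.le)).symm

lemma continuous_lnp : Continuous lnp :=
  (continuous_id.max continuous_const).log fun _ => ne_of_gt (lt_of_lt_of_le one_pos (le_max_right _ _))

lemma lnp_div_le {x y z : ℝ} (hx : 0 ≤ x) (hy : 0 < y) (hz : 0 < z) :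
    lnp (x / z) ≤ lnp (x / y) + lnp (y / z) := by
  have : x / z = (x / y) * (y / z) := by field_simp
  rw [this]
  exact lnp_mul_le (by positivity) (by positivity)

open intervalIntegral Real Finset Nat

lemma deriv_aux (c : ℝ) (n : ℕ) {x : ℝ} (hx : 0 < x) :
    HasDerivAt (fun t => t * (c - Real.log t) ^ (n+1))
      ((c - Real.log x) ^ (n+1) - (n+1) * (c - Real.log x) ^ n) x := by
  have h1 : HasDerivAt (fun t : ℝ => c - Real.log t) (-x⁻¹) x :=
    ((Real.hasDerivAt_log hx.ne').const_sub c)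
  have h3 := (hasDerivAt_id x).fun_mul (h1.fun_pow (n+1))
  refine h3.congr_deriv ?_
  push_cast [id]
  field_simp
  ring

lemma int2 (k : ℕ) {a₀ B M : ℝ} (h0 : 0 < a₀) (h1 : a₀ ≤ B) (h2 : B ≤ M) :
    ∫ x in a₀..B, Real.log (M / x) ^ k ≤
      B * ∑ i ∈ Finset.range (k+1), (k ! / i ! : ℝ) * Real.log (M / B) ^ i := by
  have hB : 0 < B := lt_of_lt_of_le h0 h1
  have hM : 0 < M := lt_of_lt_of_le hB h2
  have hIcc : Set.uIcc a₀ B = Set.Icc a₀ B := Set.uIcc_of_le h1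
  have hpos : ∀ x ∈ Set.uIcc a₀ B, 0 < x := by
    rw [hIcc]; intro x hx; exact lt_of_lt_of_le h0 hx.1
  have hcont : ∀ n : ℕ, ContinuousOn (fun x => Real.log (M / x) ^ n) (Set.uIcc a₀ B) := by
    intro n
    apply ContinuousOn.pow
    apply ContinuousOn.log
    · exact continuousOn_const.div continuousOn_id (fun x hx => (hpos x hx).ne')
    · intro x hx; exact ne_of_gt (div_pos hM (hpos x hx))
  have hint : ∀ n : ℕ, IntervalIntegrable (fun x => Real.log (M / x) ^ n)
      MeasureTheory.volume a₀ B := fun n => (hcont n).intervalIntegrable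
  have hZ : 0 ≤ Real.log (M / B) := Real.log_nonneg ((one_le_div hB).mpr h2)
  induction k with
  | zero =>
    simp only [pow_zero, Finset.range_one, Finset.sum_singleton, Nat.factorial_zero,
      Nat.cast_one, div_self (one_ne_zero), one_mul, ne_eq]
    rw [integral_one]
    norm_num
    linarith
  | succ n ih =>
    have e1 : Real.log (M / B) = Real.log M - Real.log B := Real.log_div hM.ne' hB.ne'
    have e2 : Real.log (M / a₀) = Real.log M - Real.log a₀ := Real.log_div hM.ne' h0.ne'
    have key : ∫ x in a₀..B, (Real.log (M / x) ^ (n+1) - (n+1) * Real.log (M / x) ^ n)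
        = B * Real.log (M / B) ^ (n+1) - a₀ * Real.log (M / a₀) ^ (n+1) := by
      rw [e1, e2]
      apply intervalIntegral.integral_eq_sub_of_hasDerivAt
        (f := fun t => t * (Real.log M - Real.log t) ^ (n+1))
      · intro x hx
        have hxp := hpos x hx
        have := deriv_aux (Real.log M) n hxp
        rw [Real.log_div hM.ne' hxp.ne']
        exact this
      · apply ContinuousOn.intervalIntegrable
        exact (hcont (n+1)).sub (continuousOn_const.mul (hcont n))
    have hsplit : ∫ x in a₀..B, (Real.log (M / x) ^ (n+1) - (n+1) * Real.log (M / x) ^ n)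
        = (∫ x in a₀..B, Real.log (M / x) ^ (n+1)) - (n+1) * ∫ x in a₀..B, Real.log (M / x) ^ n := by
      rw [intervalIntegral.integral_sub (hint (n+1)) (((hint n).const_mul _))]
      rw [intervalIntegral.integral_const_mul]
    have ha₀log : 0 ≤ a₀ * Real.log (M / a₀) ^ (n+1) := by
      have : 0 ≤ Real.log (M / a₀) := Real.log_nonneg ((one_le_div h0).mpr (h1.trans h2))
      positivity
    have hineq : ∫ x in a₀..B, Real.log (M / x) ^ (n+1)
        ≤ B * Real.log (M / B) ^ (n+1) + (n+1) * ∫ x in a₀..B, Real.log (M / x) ^ n := by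
      nlinarith [key, hsplit]
    have hmul : (n+1 : ℝ) * ∫ x in a₀..B, Real.log (M / x) ^ n
        ≤ (n+1) * (B * ∑ i ∈ Finset.range (n+1), (n ! / i ! : ℝ) * Real.log (M / B) ^ i) := by
      apply mul_le_mul_of_nonneg_left ih (by positivity)
    have hstep : ∀ i ∈ Finset.range (n+1), ((n+1)! / i ! : ℝ) * Real.log (M / B) ^ i
        = (n+1) * ((n ! / i ! : ℝ) * Real.log (M / B) ^ i) := by
      intro i _
      rw [Nat.factorial_succ]
      push_cast
      ring
    have hfact : ((n+1)! / (n+1)! : ℝ) = 1 := by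
      rw [div_self]; positivity
    have hfin : B * Real.log (M / B) ^ (n+1)
        + (n+1) * (B * ∑ i ∈ Finset.range (n+1), (n ! / i ! : ℝ) * Real.log (M / B) ^ i)
        = B * ∑ i ∈ Finset.range (n+2), ((n+1)! / i ! : ℝ) * Real.log (M / B) ^ i := by
      conv_rhs => rw [Finset.sum_range_succ]
      rw [Finset.sum_congr rfl hstep, ← Finset.mul_sum, hfact, one_mul]
      ring
    linarith

open intervalIntegral Real Finset Nat

set_option maxHeartbeats 1000000

lemma deriv_aux2 {m : ℝ} (hm : m < -1) (c : ℝ) (n : ℕ) {x : ℝ} (hx : 0 < x) :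
    HasDerivAt (fun t : ℝ => t ^ (m+1) * (Real.log t - c) ^ (n+1) / (m+1))
      (x ^ m * (Real.log x - c) ^ (n+1) + ((n+1)/(m+1)) * (x ^ m * (Real.log x - c) ^ n)) x := by
  have hm1 : m + 1 ≠ 0 := ne_of_lt (by linarith)
  have h1 : HasDerivAt (fun t : ℝ => t ^ (m+1)) ((m+1) * x ^ m) x := by
    have := Real.hasDerivAt_rpow_const (x := x) (p := m+1) (Or.inl hx.ne')
    simpa using this
  have h2 : HasDerivAt (fun t : ℝ => (Real.log t - c) ^ (n+1))
      ((n+1) * (Real.log x - c) ^ n * x⁻¹) x := by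
    have := ((Real.hasDerivAt_log hx.ne').sub_const c).fun_pow (n+1)
    simpa using this
  have h3 := (h1.fun_mul h2).div_const (m+1)
  refine h3.congr_deriv ?_
  have hxm : x ^ (m+1) = x ^ m * x := Real.rpow_add_one hx.ne' m
  rw [hxm]
  field_simp

lemma int1 {m : ℝ} (hm : m < -1) (i : ℕ) {B T : ℝ} (hB : 0 < B) (hT : B ≤ T) :
    ∫ x in B..T, x ^ m * Real.log (x / B) ^ i ≤ B ^ (m+1) * i ! / (-(m+1)) ^ (i+1) := by
  have hs : (0:ℝ) < -(m+1) := by linarith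
  have hm1 : m + 1 ≠ 0 := ne_of_lt (by linarith)
  have hIcc : Set.uIcc B T = Set.Icc B T := Set.uIcc_of_le hT
  have hpos : ∀ x ∈ Set.uIcc B T, 0 < x := by
    rw [hIcc]; intro x hx; exact lt_of_lt_of_le hB hx.1
  have hcont : ∀ n : ℕ, ContinuousOn (fun x => x ^ m * Real.log (x / B) ^ n) (Set.uIcc B T) := by
    intro n
    apply ContinuousOn.mul
    · exact continuousOn_id.rpow_const (fun x hx => Or.inl (hpos x hx).ne')
    · apply ContinuousOn.pow
      apply ContinuousOn.log
      · exact continuousOn_id.div continuousOn_const (fun _ _ => hB.ne')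
      · intro x hx; exact ne_of_gt (div_pos (hpos x hx) hB)
  have hint : ∀ n : ℕ, IntervalIntegrable (fun x => x ^ m * Real.log (x / B) ^ n)
      MeasureTheory.volume B T := fun n => (hcont n).intervalIntegrable
  have hnn : ∀ n : ℕ, 0 ≤ ∫ x in B..T, x ^ m * Real.log (x / B) ^ n := by
    intro n
    apply intervalIntegral.integral_nonneg hT
    intro x hx
    have hxp : 0 < x := lt_of_lt_of_le hB hx.1
    have : 0 ≤ Real.log (x / B) := Real.log_nonneg ((one_le_div hB).mpr hx.1)
    positivity
  have hBp : 0 < B ^ (m+1) := Real.rpow_pos_of_pos hB _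
  have hTp : 0 ≤ T ^ (m+1) := Real.rpow_nonneg (hB.trans_le hT).le _
  induction i with
  | zero =>
    simp only [pow_zero, mul_one, Nat.factorial_zero, Nat.cast_one, pow_one]
    rw [integral_rpow (Or.inr ⟨hm.ne, by rw [hIcc]; intro h; exact absurd h.1 (not_le.mpr hB)⟩)]
    have h1 : (T ^ (m+1) - B ^ (m+1)) / (m+1) = (B ^ (m+1) - T ^ (m+1)) / (-(m+1)) := by
      rw [div_eq_div_iff hm1 (ne_of_gt hs)]
      ring
    rw [h1, pow_one]
    gcongr
    linarith
  | succ n ih =>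
    have key : ∫ x in B..T, (x ^ m * Real.log (x / B) ^ (n+1)
          + ((n+1)/(m+1)) * (x ^ m * Real.log (x / B) ^ n))
        = T ^ (m+1) * Real.log (T / B) ^ (n+1) / (m+1)
          - B ^ (m+1) * Real.log (B / B) ^ (n+1) / (m+1) := by
      rw [Real.log_div (hB.trans_le hT).ne' hB.ne', Real.log_div hB.ne' hB.ne']
      apply intervalIntegral.integral_eq_sub_of_hasDerivAt
        (f := fun t => t ^ (m+1) * (Real.log t - Real.log B) ^ (n+1) / (m+1))
      · intro x hx
        have hxp := hpos x hx
        have := deriv_aux2 hm (Real.log B) n hxp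
        rw [Real.log_div hxp.ne' hB.ne']
        exact this
      · apply ContinuousOn.intervalIntegrable
        exact (hcont (n+1)).add (continuousOn_const.mul (hcont n))
    have hsplit : ∫ x in B..T, (x ^ m * Real.log (x / B) ^ (n+1)
          + ((n+1)/(m+1)) * (x ^ m * Real.log (x / B) ^ n))
        = (∫ x in B..T, x ^ m * Real.log (x / B) ^ (n+1))
          + ((n+1)/(m+1)) * ∫ x in B..T, x ^ m * Real.log (x / B) ^ n := by
      rw [intervalIntegral.integral_add (hint (n+1)) ((hint n).const_mul _)]
      rw [intervalIntegral.integral_const_mul]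
    have hBB : Real.log (B / B) = 0 := by rw [div_self hB.ne', Real.log_one]
    rw [hBB] at key
    rw [zero_pow (Nat.succ_ne_zero n)] at key
    rw [mul_zero, zero_div, sub_zero] at key
    have huT : T ^ (m+1) * Real.log (T / B) ^ (n+1) / (m+1) ≤ 0 := by
      have h2 : 0 ≤ Real.log (T / B) := Real.log_nonneg ((one_le_div hB).mpr hT)
      have h3 : 0 ≤ T ^ (m+1) * Real.log (T / B) ^ (n+1) := by positivity
      exact div_nonpos_of_nonneg_of_nonpos h3 (by linarith)
    have hrw : ((n+1:ℝ)/(m+1)) * (∫ x in B..T, x ^ m * Real.log (x / B) ^ n)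
        = -(((n+1:ℝ)/(-(m+1))) * ∫ x in B..T, x ^ m * Real.log (x / B) ^ n) := by
      rw [div_neg]
      ring
    have hineq : ∫ x in B..T, x ^ m * Real.log (x / B) ^ (n+1)
        ≤ ((n+1)/(-(m+1))) * ∫ x in B..T, x ^ m * Real.log (x / B) ^ n := by
      rw [hsplit, hrw] at key
      linarith
    have hcoef : (0:ℝ) ≤ (n+1)/(-(m+1)) := by positivity
    have hmul := mul_le_mul_of_nonneg_left ih hcoef
    have hfin : ((n+1:ℝ)/(-(m+1))) * (B ^ (m+1) * n ! / (-(m+1)) ^ (n+1))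
        = B ^ (m+1) * (n+1)! / (-(m+1)) ^ (n+1+1) := by
      rw [Nat.factorial_succ]
      push_cast
      field_simp
      ring
    calc ∫ x in B..T, x ^ m * Real.log (x / B) ^ (n+1)
        ≤ ((n+1)/(-(m+1))) * ∫ x in B..T, x ^ m * Real.log (x / B) ^ n := hineq
      _ ≤ ((n+1)/(-(m+1))) * (B ^ (m+1) * n ! / (-(m+1)) ^ (n+1)) := hmul
      _ = B ^ (m+1) * (n+1)! / (-(m+1)) ^ (n+1+1) := hfin

open MvPolynomial

def NNCoeff (p : MvPolynomial (Fin 2) ℝ) : Prop := ∀ d, 0 ≤ p.coeff d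

lemma NNCoeff.add {p q : MvPolynomial (Fin 2) ℝ} (hp : NNCoeff p) (hq : NNCoeff q) :
    NNCoeff (p + q) := fun d => by
  rw [coeff_add]; exact add_nonneg (hp d) (hq d)

lemma NNCoeff.mul {p q : MvPolynomial (Fin 2) ℝ} (hp : NNCoeff p)
    (hq : NNCoeff q) : NNCoeff (p * q) := fun d => by
  rw [coeff_mul]
  exact Finset.sum_nonneg fun x _ => mul_nonneg (hp _) (hq _)

lemma NNCoeff.C {c : ℝ} (hc : 0 ≤ c) : NNCoeff (MvPolynomial.C (σ := Fin 2) c) := fun d => by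
  rw [coeff_C]
  split <;> simp [hc]

lemma NNCoeff.X (i : Fin 2) : NNCoeff (MvPolynomial.X (R := ℝ) i) := fun d => by
  rw [MvPolynomial.X, coeff_monomial]
  split <;> norm_num

lemma NNCoeff.pow {p : MvPolynomial (Fin 2) ℝ} (hp : NNCoeff p) (n : ℕ) :
    NNCoeff (p ^ n) := by
  induction n with
  | zero => simpa [pow_zero] using NNCoeff.C (le_of_lt one_pos)
  | succ n ih => rw [pow_succ]; exact ih.mul hp

lemma NNCoeff.sum {ι : Type*} (s : Finset ι) (f : ι → MvPolynomial (Fin 2) ℝ)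
    (h : ∀ i ∈ s, NNCoeff (f i)) : NNCoeff (∑ i ∈ s, f i) := fun d => by
  rw [MvPolynomial.coeff_sum]
  exact Finset.sum_nonneg fun i hi => h i hi d

lemma contOn_logpow (n : ℕ) {M a b : ℝ} (hMp : 0 < M) (h : ∀ x ∈ Set.uIcc a b, 0 < x) :
    ContinuousOn (fun x => Real.log (M / x) ^ n) (Set.uIcc a b) := by
  apply ContinuousOn.pow
  apply ContinuousOn.log
  · exact continuousOn_const.div continuousOn_id (fun x hx => (h x hx).ne')
  · intro x hx; exact ne_of_gt (div_pos hMp (h x hx))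

lemma contOn_rpowlog (n : ℕ) (m : ℝ) {B a b : ℝ} (hB : 0 < B) (h : ∀ x ∈ Set.uIcc a b, 0 < x) :
    ContinuousOn (fun x => x ^ m * Real.log (x / B) ^ n) (Set.uIcc a b) := by
  apply ContinuousOn.mul
  · exact continuousOn_id.rpow_const (fun x hx => Or.inl (h x hx).ne')
  · apply ContinuousOn.pow
    apply ContinuousOn.log
    · exact continuousOn_id.div continuousOn_const (fun _ _ => hB.ne')
    · intro x hx; exact ne_of_gt (div_pos (h x hx) hB)

open MvPolynomial Finset Nat in
theorem stmt3 (k l : ℕ) (m : ℝ) (hm : m < -1) :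
    ∃ P : MvPolynomial (Fin 2) ℝ, (∀ d, 0 ≤ P.coeff d) ∧
      ∀ a₀ a₁ A K L : ℝ, 0 < a₀ → a₀ ≤ a₁ → 0 ≤ A → 0 ≤ K → 0 < L →
        ∫ x in a₀..a₁, max A x ^ m * lnp (K / x) ^ k * lnp (x / L) ^ l ≤
          max A a₀ ^ (m + 1) *
            MvPolynomial.eval ![lnp (max K A / max a₀ (min A L)), lnp (a₀ / L)] P := by
  have hs : (0:ℝ) < -(m+1) := by linarith
  refine ⟨(X 0 + X 1)^l * ∑ i ∈ range (k+1), C ((k ! : ℝ)/ i !) * X 0 ^ i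
    + X 0 ^ k * ∑ i ∈ range (l+1), C ((l.choose i : ℝ) * i ! / (-(m+1))^(i+1)) * (X 0 + X 1)^(l-i),
    ?_, ?_⟩
  · -- nonneg coefficients
    apply NNCoeff.add
    · apply NNCoeff.mul (((NNCoeff.X 0).add (NNCoeff.X 1)).pow l)
      apply NNCoeff.sum
      intro i _
      exact (NNCoeff.C (by positivity)).mul ((NNCoeff.X 0).pow i)
    · apply NNCoeff.mul ((NNCoeff.X 0).pow k)
      apply NNCoeff.sum
      intro i _
      exact (NNCoeff.C (by positivity)).mul (((NNCoeff.X 0).add (NNCoeff.X 1)).pow (l-i))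
  intro a₀ a₁ A K L h0 h01 hA hK hL
  set B := max A a₀ with hBdef
  set M := max K A with hMdef
  set D := max a₀ (min A L) with hDdef
  set Xv := lnp (M / D) with hXdef
  set Yv := lnp (a₀ / L) with hYdef
  have hB0 : a₀ ≤ B := le_max_right _ _
  have hB : 0 < B := lt_of_lt_of_le h0 hB0
  have hAB : A ≤ B := le_max_left _ _
  have hM0 : 0 ≤ M := le_trans hK (le_max_left _ _)
  have hDa : a₀ ≤ D := le_max_left _ _
  have hD : 0 < D := lt_of_lt_of_le h0 hDa
  have hDB : D ≤ B := max_le hB0 (le_trans (min_le_left _ _) hAB)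
  have hXnn : 0 ≤ Xv := lnp_nonneg _
  have hYnn : 0 ≤ Yv := lnp_nonneg _
  have fact1 : lnp (B / D) ≤ Xv := by
    rw [hBdef, ← max_div_div_right hD.le A a₀, lnp_max]
    apply max_le
    · exact lnp_mono (by gcongr; exact le_max_right K A)
    · rw [lnp_eq_zero ((div_le_one hD).mpr hDa)]; exact hXnn
  have fact2 : lnp (M / B) ≤ Xv := lnp_mono (div_le_div_of_nonneg_left hM0 hD hDB)
  have factDL : lnp (D / L) ≤ Yv := by
    rw [hDdef, ← max_div_div_right hL.le a₀ (min A L), lnp_max]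
    apply max_le le_rfl
    rw [lnp_eq_zero ((div_le_one hL).mpr (min_le_right A L))]; exact hYnn
  set T := max a₁ B with hTdef
  have h1T : a₁ ≤ T := le_max_left _ _
  have hBT : B ≤ T := le_max_right _ _
  set g : ℝ → ℝ := fun x => max A x ^ m * lnp (M / x) ^ k * (lnp (x / D) + Yv) ^ l with hgdef
  have hgcont : ∀ a b : ℝ, 0 < a → a ≤ b → ContinuousOn g (Set.uIcc a b) := by
    intro a b ha hab
    have hpos : ∀ x ∈ Set.uIcc a b, 0 < x := by
      rw [Set.uIcc_of_le hab]; intro x hx; exact lt_of_lt_of_le ha hx.1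
    apply ContinuousOn.mul
    apply ContinuousOn.mul
    · exact ((continuous_const.max continuous_id).continuousOn).rpow_const
        (fun x hx => Or.inl (ne_of_gt (lt_of_lt_of_le (hpos x hx) (le_max_right A x))))
    · exact (continuous_lnp.comp_continuousOn
        (continuousOn_const.div continuousOn_id fun x hx => (hpos x hx).ne')).pow k
    · exact (((continuous_lnp.comp (continuous_id.div_const D)).add continuous_const).pow l).continuousOn
  have hfcont : ∀ a b : ℝ, 0 < a → a ≤ b →
      ContinuousOn (fun x => max A x ^ m * lnp (K / x) ^ k * lnp (x / L) ^ l) (Set.uIcc a b) := by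
    intro a b ha hab
    have hpos : ∀ x ∈ Set.uIcc a b, 0 < x := by
      rw [Set.uIcc_of_le hab]; intro x hx; exact lt_of_lt_of_le ha hx.1
    apply ContinuousOn.mul
    apply ContinuousOn.mul
    · exact ((continuous_const.max continuous_id).continuousOn).rpow_const
        (fun x hx => Or.inl (ne_of_gt (lt_of_lt_of_le (hpos x hx) (le_max_right A x))))
    · exact (continuous_lnp.comp_continuousOn
        (continuousOn_const.div continuousOn_id fun x hx => (hpos x hx).ne')).pow k
    · exact ((continuous_lnp.comp (continuous_id.div_const L)).pow l).continuousOn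
  -- Step 1/2 : pointwise comparison on [a₀, a₁]
  have step12 : (∫ x in a₀..a₁, max A x ^ m * lnp (K / x) ^ k * lnp (x / L) ^ l)
      ≤ ∫ x in a₀..a₁, g x := by
    apply intervalIntegral.integral_mono_on h01 ((hfcont a₀ a₁ h0 h01).intervalIntegrable)
      ((hgcont a₀ a₁ h0 h01).intervalIntegrable)
    intro x hx
    have hx0 : 0 < x := lt_of_lt_of_le h0 hx.1
    have hmx : (0:ℝ) ≤ max A x ^ m := Real.rpow_nonneg (le_trans hx0.le (le_max_right A x)) m
    have h1 : lnp (K / x) ≤ lnp (M / x) := lnp_mono (by gcongr; exact le_max_left K A)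
    have h2 : lnp (x / L) ≤ lnp (x / D) + Yv := by
      have := lnp_div_le hx0.le hD hL
      linarith [factDL]
    simp only [hgdef]
    apply mul_le_mul
    · apply mul_le_mul le_rfl (pow_le_pow_left₀ (lnp_nonneg _) h1 k) (pow_nonneg (lnp_nonneg _) k) hmx
    · exact pow_le_pow_left₀ (lnp_nonneg _) h2 l
    · exact pow_nonneg (lnp_nonneg _) l
    · exact mul_nonneg hmx (pow_nonneg (lnp_nonneg _) k)
  -- nonneg of g
  have hg0 : ∀ x : ℝ, 0 < x → 0 ≤ g x := by
    intro x hx0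
    simp only [hgdef]
    exact mul_nonneg (mul_nonneg (Real.rpow_nonneg (le_trans hx0.le (le_max_right A x)) m)
      (pow_nonneg (lnp_nonneg _) k)) (pow_nonneg (add_nonneg (lnp_nonneg _) hYnn) l)
  -- Step 3: extend to [a₀, T]
  have step3 : (∫ x in a₀..a₁, g x) ≤ ∫ x in a₀..T, g x := by
    rw [← intervalIntegral.integral_add_adjacent_intervals
      ((hgcont a₀ a₁ h0 h01).intervalIntegrable)
      ((hgcont a₁ T (lt_of_lt_of_le h0 h01) h1T).intervalIntegrable)]
    have : 0 ≤ ∫ x in a₁..T, g x := by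
      apply intervalIntegral.integral_nonneg h1T
      intro x hx
      exact hg0 x (lt_of_lt_of_le (lt_of_lt_of_le h0 h01) hx.1)
    linarith
  -- Step 4: split at B
  have step4 : (∫ x in a₀..T, g x) = (∫ x in a₀..B, g x) + ∫ x in B..T, g x :=
    (intervalIntegral.integral_add_adjacent_intervals
      ((hgcont a₀ B h0 hB0).intervalIntegrable) ((hgcont B T hB hBT).intervalIntegrable)).symm
  -- Front piece
  set M' := max M B with hM'def
  have hBM' : B ≤ M' := le_max_right _ _
  have hM'p : 0 < M' := lt_of_lt_of_le hB hBM'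
  have hlogM'B : Real.log (M' / B) = lnp (M / B) := by
    rw [lnp, hM'def, ← max_div_div_right hB.le M B, div_self hB.ne']
  have hposab : ∀ a b : ℝ, 0 < a → a ≤ b → ∀ x ∈ Set.uIcc a b, 0 < x := by
    intro a b ha hab
    rw [Set.uIcc_of_le hab]; intro x hx; exact lt_of_lt_of_le ha hx.1
  have front : (∫ x in a₀..B, g x)
      ≤ B ^ (m+1) * ((Xv+Yv)^l * ∑ i ∈ range (k+1), ((k ! : ℝ)/ i !) * Xv ^ i) := by
    have hb1 : ∀ x ∈ Set.Icc a₀ B, g x ≤ (B ^ m * (Xv+Yv)^l) * Real.log (M' / x) ^ k := by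
      intro x hx
      have hx0 : 0 < x := lt_of_lt_of_le h0 hx.1
      have hBx : B ≤ max A x := max_le_max le_rfl hx.1
      have e1 : max A x ^ m ≤ B ^ m := Real.rpow_le_rpow_of_nonpos hB hBx (by linarith)
      have e4 : (0:ℝ) ≤ Real.log (M' / x) := Real.log_nonneg ((one_le_div hx0).mpr (hx.2.trans hBM'))
      have e2 : lnp (M / x) ≤ Real.log (M' / x) := by
        rw [lnp]
        apply Real.log_le_log (lt_of_lt_of_le one_pos (le_max_right _ _))
        apply max_le
        · gcongr; exact le_max_left M B
        · exact (one_le_div hx0).mpr (hx.2.trans hBM')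
      have e3 : lnp (x / D) + Yv ≤ Xv + Yv := by
        have : lnp (x / D) ≤ lnp (B / D) := lnp_mono (by gcongr; exact hx.2)
        linarith [fact1]
      have hBm : (0:ℝ) ≤ B ^ m := Real.rpow_nonneg hB.le m
      simp only [hgdef]
      calc max A x ^ m * lnp (M / x) ^ k * (lnp (x / D) + Yv) ^ l
          ≤ B ^ m * Real.log (M' / x) ^ k * (Xv + Yv) ^ l := by
            apply mul_le_mul
            · exact mul_le_mul e1 (pow_le_pow_left₀ (lnp_nonneg _) e2 k)
                (pow_nonneg (lnp_nonneg _) k) hBm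
            · exact pow_le_pow_left₀ (add_nonneg (lnp_nonneg _) hYnn) e3 l
            · exact pow_nonneg (add_nonneg (lnp_nonneg _) hYnn) l
            · exact mul_nonneg hBm (pow_nonneg e4 k)
        _ = (B ^ m * (Xv+Yv)^l) * Real.log (M' / x) ^ k := by ring
    have hXY : (0:ℝ) ≤ (Xv+Yv)^l := pow_nonneg (add_nonneg hXnn hYnn) l
    have hBm : (0:ℝ) ≤ B ^ m := Real.rpow_nonneg hB.le m
    calc (∫ x in a₀..B, g x)
        ≤ ∫ x in a₀..B, (B ^ m * (Xv+Yv)^l) * Real.log (M' / x) ^ k := by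
          apply intervalIntegral.integral_mono_on hB0
            ((hgcont a₀ B h0 hB0).intervalIntegrable) _ hb1
          exact (continuousOn_const.mul (contOn_logpow k hM'p (hposab a₀ B h0 hB0))).intervalIntegrable
      _ = (B ^ m * (Xv+Yv)^l) * ∫ x in a₀..B, Real.log (M' / x) ^ k :=
          intervalIntegral.integral_const_mul _ _
      _ ≤ (B ^ m * (Xv+Yv)^l) * (B * ∑ i ∈ range (k+1), ((k ! : ℝ)/ i !) * Real.log (M' / B) ^ i) :=
          mul_le_mul_of_nonneg_left (int2 k h0 hB0 hBM') (mul_nonneg hBm hXY)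
      _ ≤ (B ^ m * (Xv+Yv)^l) * (B * ∑ i ∈ range (k+1), ((k ! : ℝ)/ i !) * Xv ^ i) := by
          apply mul_le_mul_of_nonneg_left _ (mul_nonneg hBm hXY)
          apply mul_le_mul_of_nonneg_left _ hB.le
          apply Finset.sum_le_sum
          intro i _
          apply mul_le_mul_of_nonneg_left _ (by positivity)
          apply pow_le_pow_left₀ (by rw [hlogM'B]; exact lnp_nonneg _) _ i
          rw [hlogM'B]; exact fact2
      _ = B ^ (m+1) * ((Xv+Yv)^l * ∑ i ∈ range (k+1), ((k ! : ℝ)/ i !) * Xv ^ i) := by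
          rw [Real.rpow_add_one hB.ne']; ring
  -- Tail piece
  set Q : ℕ → ℝ := fun i => Xv^k * ((Xv+Yv)^(l-i) * (l.choose i : ℝ)) with hQdef
  have hQnn : ∀ i, 0 ≤ Q i := by
    intro i
    simp only [hQdef]
    have h1 : (0:ℝ) ≤ (Xv+Yv)^(l-i) := pow_nonneg (add_nonneg hXnn hYnn) _
    positivity
  have hinti : ∀ i ∈ range (l+1), IntervalIntegrable
      (fun x => Q i * (x^m * Real.log (x/B)^i)) MeasureTheory.volume B T := by
    intro i _
    exact (continuousOn_const.mul (contOn_rpowlog i m hB (hposab B T hB hBT))).intervalIntegrable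
  have tail : (∫ x in B..T, g x)
      ≤ ∑ i ∈ range (l+1), Q i * (B^(m+1) * i ! / (-(m+1))^(i+1)) := by
    have hb2 : ∀ x ∈ Set.Icc B T, g x ≤ ∑ i ∈ range (l+1),
        Q i * (x^m * Real.log (x/B)^i) := by
      intro x hx
      have hx0 : 0 < x := lt_of_lt_of_le hB hx.1
      have e1 : max A x ^ m ≤ x ^ m :=
        Real.rpow_le_rpow_of_nonpos hx0 (le_max_right A x) (by linarith)
      have e2 : lnp (M / x) ≤ Xv :=
        le_trans (lnp_mono (div_le_div_of_nonneg_left hM0 hB hx.1)) fact2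
      have e4 : (0:ℝ) ≤ Real.log (x / B) := Real.log_nonneg ((one_le_div hB).mpr hx.1)
      have e3 : lnp (x / D) + Yv ≤ Real.log (x / B) + (Xv + Yv) := by
        have h4 : lnp (x / D) ≤ lnp (x / B) + lnp (B / D) := lnp_div_le hx0.le hB hD
        have h5 : lnp (x / B) = Real.log (x / B) := lnp_eq_log ((one_le_div hB).mpr hx.1)
        rw [h5] at h4
        linarith [fact1]
      have hxm : (0:ℝ) ≤ x ^ m := Real.rpow_nonneg hx0.le m
      have key : g x ≤ x ^ m * Xv ^ k * (Real.log (x/B) + (Xv+Yv)) ^ l := by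
        simp only [hgdef]
        apply mul_le_mul
        · exact mul_le_mul e1 (pow_le_pow_left₀ (lnp_nonneg _) e2 k)
            (pow_nonneg (lnp_nonneg _) k) hxm
        · exact pow_le_pow_left₀ (add_nonneg (lnp_nonneg _) hYnn) e3 l
        · exact pow_nonneg (add_nonneg (lnp_nonneg _) hYnn) l
        · exact mul_nonneg hxm (pow_nonneg hXnn k)
      refine key.trans (le_of_eq ?_)
      rw [add_pow, Finset.mul_sum]
      apply Finset.sum_congr rfl
      intro i _
      simp only [hQdef]
      ring
    have c1 : (∫ x in B..T, g x) ≤ ∫ x in B..T, ∑ i ∈ range (l+1),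
        Q i * (x^m * Real.log (x/B)^i) :=
      intervalIntegral.integral_mono_on hBT ((hgcont B T hB hBT).intervalIntegrable)
        (by
          apply ContinuousOn.intervalIntegrable
          apply continuousOn_finset_sum
          intro i _
          exact continuousOn_const.mul (contOn_rpowlog i m hB (hposab B T hB hBT))) hb2
    have c2 : (∫ x in B..T, ∑ i ∈ range (l+1), Q i * (x^m * Real.log (x/B)^i))
        = ∑ i ∈ range (l+1), ∫ x in B..T, Q i * (x^m * Real.log (x/B)^i) :=
      intervalIntegral.integral_finset_sum hinti
    have c3 : ∀ i ∈ range (l+1), (∫ x in B..T, Q i * (x^m * Real.log (x/B)^i))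
        ≤ Q i * (B^(m+1) * i ! / (-(m+1))^(i+1)) := by
      intro i _
      rw [intervalIntegral.integral_const_mul]
      exact mul_le_mul_of_nonneg_left (int1 hm i hB hBT) (hQnn i)
    calc (∫ x in B..T, g x) ≤ _ := c1
      _ = _ := c2
      _ ≤ ∑ i ∈ range (l+1), Q i * (B^(m+1) * i ! / (-(m+1))^(i+1)) :=
        Finset.sum_le_sum c3
  -- Final assembly
  have htail_eq : ∑ i ∈ range (l+1), Q i * (B^(m+1) * i ! / (-(m+1))^(i+1))
      = B^(m+1) * (Xv^k * ∑ i ∈ range (l+1),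
          ((l.choose i : ℝ) * i ! / (-(m+1))^(i+1)) * (Xv+Yv)^(l-i)) := by
    rw [Finset.mul_sum, Finset.mul_sum]
    apply Finset.sum_congr rfl
    intro i _
    simp only [hQdef]
    ring
  have heval : MvPolynomial.eval ![Xv, Yv]
      ((X 0 + X 1)^l * ∑ i ∈ range (k+1), C ((k ! : ℝ)/ i !) * X 0 ^ i
        + X 0 ^ k * ∑ i ∈ range (l+1), C ((l.choose i : ℝ) * i ! / (-(m+1))^(i+1)) * (X 0 + X 1)^(l-i))
      = (Xv+Yv)^l * ∑ i ∈ range (k+1), ((k ! : ℝ)/ i !) * Xv ^ i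
        + Xv^k * ∑ i ∈ range (l+1), ((l.choose i : ℝ) * i ! / (-(m+1))^(i+1)) * (Xv+Yv)^(l-i) := by
    simp [MvPolynomial.eval_sum, Matrix.cons_val_zero, Matrix.cons_val_one, Matrix.head_cons]
  rw [heval, mul_add]
  linarith [step12, step3, step4, front, tail, htail_eq]
end

section
/- For all natural numbers k, l and every real number m > −1 there exists a polynomial P in two variables with nonnegative real coefficients (depending only on k, l, m) such that for all real numbers a₀, a₁, b, c, K, L with 0 ≤ a₀ ≤ a₁, a₁ > 0, b ≥ 0, K ≥ 0, L > 0 and c ≥ b, one has ∫_{a₀}^{a₁} max(x,b)^m · (ln₊(K/x))^k · (ln₊(x/L))^l dx ≤ max(c,a₁)^{m+1} · P( ln₊(K/max(c,a₁)), ln₊(a₁/L) ). -/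
lemma log_le_lnp {x : ℝ} (hx : 0 ≤ x) : Real.log x ≤ lnp x := by
  rcases hx.lt_or_eq with h | h
  · exact Real.log_le_log h (le_max_left _ _)
  · simp [lnp, ← h]

lemma lnp_div_le_s4 {K M x : ℝ} (hK : 0 ≤ K) (hx : 0 < x) (hxM : x ≤ M) :
    lnp (K / x) ≤ lnp (K / M) + Real.log (M / x) := by
  have hM : 0 < M := hx.trans_le hxM
  have hlog0 : 0 ≤ Real.log (M / x) := Real.log_nonneg ((one_le_div hx).mpr hxM)
  rcases le_or_gt (K / x) 1 with h | h
  · have h0 : lnp (K / x) = 0 := by rw [lnp, max_eq_right h, Real.log_one]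
    rw [h0]
    exact add_nonneg (lnp_nonneg _) hlog0
  · have hKpos : 0 < K := by
      rcases hK.lt_or_eq with h' | h'
      · exact h'
      · rw [← h', zero_div] at h; exact absurd h (by norm_num)
    have h1 : lnp (K / x) = Real.log (K / x) := by rw [lnp, max_eq_left h.le]
    have h2 : K / x = K / M * (M / x) := by field_simp
    rw [h1, h2, Real.log_mul (by positivity) (by positivity)]
    exact add_le_add (log_le_lnp (by positivity)) le_rfl

lemma log_le_inv_mul_rpow {t ε : ℝ} (ht : 0 < t) (hε : 0 < ε) :
    Real.log t ≤ ε⁻¹ * t ^ ε := by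
  have h1 := Real.log_le_sub_one_of_pos (Real.rpow_pos_of_pos ht ε)
  rw [Real.log_rpow ht] at h1
  have h2 : ε * Real.log t ≤ t ^ ε := by linarith
  calc Real.log t = ε⁻¹ * (ε * Real.log t) := by field_simp
    _ ≤ ε⁻¹ * t ^ ε := mul_le_mul_of_nonneg_left h2 (inv_nonneg.mpr hε.le)

theorem stmt4 (k l : ℕ) (m : ℝ) (hm : -1 < m) :
    ∃ P : MvPolynomial (Fin 2) ℝ, (∀ d, 0 ≤ P.coeff d) ∧
      ∀ a₀ a₁ b c K L : ℝ, 0 ≤ a₀ → a₀ ≤ a₁ → 0 < a₁ → 0 ≤ b → 0 ≤ K → 0 < L → b ≤ c →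
        ∫ x in a₀..a₁, max x b ^ m * lnp (K / x) ^ k * lnp (x / L) ^ l ≤
          max c a₁ ^ (m + 1) *
            MvPolynomial.eval ![lnp (K / max c a₁), lnp (a₁ / L)] P := by
  set μ : ℝ := min m 0 with hμdef
  have hμ1 : (0:ℝ) < μ + 1 := by
    have h1 : (-1:ℝ) < μ := lt_min hm (by norm_num)
    linarith
  have hμ0 : μ ≤ 0 := min_le_right _ _
  have hμm : μ ≤ m := min_le_left _ _
  set ε : ℝ := (μ + 1) / (2 * ((k : ℝ) + 1)) with hεdef
  have hε : 0 < ε := div_pos hμ1 (by positivity)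
  have hjε : ∀ j : ℕ, j ≤ k → (j : ℝ) * ε ≤ (μ + 1) / 2 := by
    intro j hj
    have hjk : (j : ℝ) ≤ (k : ℝ) + 1 := by
      have : (j : ℝ) ≤ (k : ℝ) := Nat.cast_le.mpr hj
      linarith
    have hhalf : (j : ℝ) / (2 * ((k : ℝ) + 1)) ≤ 1 / 2 := by
      rw [div_le_div_iff₀ (by positivity) (by norm_num)]
      nlinarith
    calc (j : ℝ) * ε = (μ + 1) * ((j : ℝ) / (2 * ((k : ℝ) + 1))) := by
          rw [hεdef]; ring
      _ ≤ (μ + 1) * (1 / 2) := mul_le_mul_of_nonneg_left hhalf hμ1.le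
      _ = (μ + 1) / 2 := by ring
  set cf : ℕ → ℝ := fun j => (k.choose j : ℝ) * ε⁻¹ ^ j * (2 / (μ + 1)) with hcfdef
  have hcf0 : ∀ j, 0 ≤ cf j := fun j =>
    mul_nonneg (mul_nonneg (Nat.cast_nonneg _) (pow_nonneg (inv_nonneg.mpr hε.le) _))
      (div_nonneg (by norm_num) hμ1.le)
  refine ⟨∑ j ∈ Finset.range (k + 1),
      MvPolynomial.C (cf j) * MvPolynomial.X 0 ^ (k - j) * MvPolynomial.X 1 ^ l, ?_, ?_⟩
  · intro d
    rw [MvPolynomial.coeff_sum]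
    refine Finset.sum_nonneg fun j _ => ?_
    rw [MvPolynomial.X_pow_eq_monomial, MvPolynomial.X_pow_eq_monomial,
      MvPolynomial.C_mul_monomial, MvPolynomial.monomial_mul, MvPolynomial.coeff_monomial]
    split
    · simpa using hcf0 j
    · exact le_rfl
  · intro a₀ a₁ b c K L ha₀ h01 ha₁ hb hK hL hbc
    rw [map_sum]
    simp only [map_mul, map_pow, MvPolynomial.eval_C, MvPolynomial.eval_X,
      Matrix.cons_val_zero, Matrix.cons_val_one, Matrix.head_cons]
    set M := max c a₁ with hMdef
    have hM : 0 < M := lt_of_lt_of_le ha₁ (le_max_right _ _)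
    have ha₁M : a₁ ≤ M := le_max_right _ _
    have hbM : b ≤ M := hbc.trans (le_max_left _ _)
    set A := lnp (K / M) with hAdef
    set B := lnp (a₁ / L) with hBdef
    have hA0 : 0 ≤ A := lnp_nonneg _
    have hB0 : 0 ≤ B := lnp_nonneg _
    set Cst : ℕ → ℝ := fun j => (k.choose j : ℝ) * A ^ (k - j) *
      (ε⁻¹ ^ j * M ^ ((j : ℝ) * ε)) * (B ^ l * M ^ (m - μ)) with hCstdef
    have hCst0 : ∀ j, 0 ≤ Cst j := fun j =>
      mul_nonneg (mul_nonneg (mul_nonneg (Nat.cast_nonneg _) (pow_nonneg hA0 _))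
        (mul_nonneg (pow_nonneg (inv_nonneg.mpr hε.le) _) (Real.rpow_nonneg hM.le _)))
        (mul_nonneg (pow_nonneg hB0 _) (Real.rpow_nonneg hM.le _))
    -- pointwise bound
    have hpt : ∀ x ∈ Set.Ioc a₀ a₁, max x b ^ m * lnp (K / x) ^ k * lnp (x / L) ^ l ≤
        ∑ j ∈ Finset.range (k + 1), Cst j * x ^ (μ - (j : ℝ) * ε) := by
      rintro x ⟨hx0, hx1⟩
      have hxpos : 0 < x := lt_of_le_of_lt ha₀ hx0
      have hxM : x ≤ M := hx1.trans ha₁M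
      have hmaxpos : 0 < max x b := lt_max_iff.mpr (Or.inl hxpos)
      have h3 : lnp (x / L) ^ l ≤ B ^ l :=
        pow_le_pow_left₀ (lnp_nonneg _) (lnp_mono ((div_le_div_iff_of_pos_right hL).mpr hx1)) l
      have h2 : max x b ^ m ≤ M ^ (m - μ) * x ^ μ := by
        have e : max x b ^ m = max x b ^ (m - μ) * max x b ^ μ := by
          rw [← Real.rpow_add hmaxpos, sub_add_cancel]
        rw [e]
        exact mul_le_mul (Real.rpow_le_rpow hmaxpos.le (max_le hxM hbM) (by linarith))
          (Real.rpow_le_rpow_of_nonpos hxpos (le_max_left _ _) hμ0)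
          (Real.rpow_nonneg hmaxpos.le _) (Real.rpow_nonneg hM.le _)
      have h1 : lnp (K / x) ≤ Real.log (M / x) + A := by
        have := lnp_div_le_s4 hK hxpos hxM
        linarith
      have hMx : (1 : ℝ) ≤ M / x := (one_le_div hxpos).mpr hxM
      have hlogpos : 0 ≤ Real.log (M / x) := Real.log_nonneg hMx
      have h1k : lnp (K / x) ^ k ≤ ∑ j ∈ Finset.range (k + 1),
          Real.log (M / x) ^ j * A ^ (k - j) * (k.choose j : ℝ) := by
        rw [← add_pow]
        exact pow_le_pow_left₀ (lnp_nonneg _) h1 k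
      have hsumnn : 0 ≤ ∑ j ∈ Finset.range (k + 1),
          Real.log (M / x) ^ j * A ^ (k - j) * (k.choose j : ℝ) :=
        Finset.sum_nonneg fun j _ => mul_nonneg (mul_nonneg (pow_nonneg hlogpos _)
          (pow_nonneg hA0 _)) (Nat.cast_nonneg _)
      have hfac : 0 ≤ M ^ (m - μ) * x ^ μ :=
        mul_nonneg (Real.rpow_nonneg hM.le _) (Real.rpow_nonneg hxpos.le _)
      have hkey : ∀ j : ℕ, x ^ μ * Real.log (M / x) ^ j ≤
          ε⁻¹ ^ j * M ^ ((j : ℝ) * ε) * x ^ (μ - (j : ℝ) * ε) := by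
        intro j
        have ht : Real.log (M / x) ^ j ≤ (ε⁻¹ * (M / x) ^ ε) ^ j :=
          pow_le_pow_left₀ hlogpos (log_le_inv_mul_rpow (by positivity) hε) j
        have e1 : (ε⁻¹ * (M / x) ^ ε) ^ j = ε⁻¹ ^ j * (M / x) ^ ((j : ℝ) * ε) := by
          rw [mul_pow, ← Real.rpow_natCast ((M / x) ^ ε) j,
            ← Real.rpow_mul (by positivity : (0:ℝ) ≤ M / x), mul_comm ε]
        have e2 : x ^ μ * (M / x) ^ ((j : ℝ) * ε) =
            M ^ ((j : ℝ) * ε) * x ^ (μ - (j : ℝ) * ε) := by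
          rw [Real.div_rpow hM.le hxpos.le, Real.rpow_sub hxpos]
          ring
        calc x ^ μ * Real.log (M / x) ^ j
            ≤ x ^ μ * (ε⁻¹ ^ j * (M / x) ^ ((j : ℝ) * ε)) := by
              rw [← e1]; exact mul_le_mul_of_nonneg_left ht (Real.rpow_nonneg hxpos.le _)
          _ = ε⁻¹ ^ j * (x ^ μ * (M / x) ^ ((j : ℝ) * ε)) := by ring
          _ = ε⁻¹ ^ j * (M ^ ((j : ℝ) * ε) * x ^ (μ - (j : ℝ) * ε)) := by rw [e2]
          _ = ε⁻¹ ^ j * M ^ ((j : ℝ) * ε) * x ^ (μ - (j : ℝ) * ε) := by ring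
      calc max x b ^ m * lnp (K / x) ^ k * lnp (x / L) ^ l
          ≤ M ^ (m - μ) * x ^ μ * lnp (K / x) ^ k * lnp (x / L) ^ l := by
            exact mul_le_mul_of_nonneg_right (mul_le_mul_of_nonneg_right h2
              (pow_nonneg (lnp_nonneg _) _)) (pow_nonneg (lnp_nonneg _) _)
        _ ≤ M ^ (m - μ) * x ^ μ * (∑ j ∈ Finset.range (k + 1),
              Real.log (M / x) ^ j * A ^ (k - j) * (k.choose j : ℝ)) * lnp (x / L) ^ l :=
            mul_le_mul_of_nonneg_right (mul_le_mul_of_nonneg_left h1k hfac)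
              (pow_nonneg (lnp_nonneg _) _)
        _ ≤ M ^ (m - μ) * x ^ μ * (∑ j ∈ Finset.range (k + 1),
              Real.log (M / x) ^ j * A ^ (k - j) * (k.choose j : ℝ)) * B ^ l :=
            mul_le_mul_of_nonneg_left h3 (mul_nonneg hfac hsumnn)
        _ = ∑ j ∈ Finset.range (k + 1), (x ^ μ * Real.log (M / x) ^ j) *
              ((k.choose j : ℝ) * A ^ (k - j) * B ^ l * M ^ (m - μ)) := by
            simp only [Finset.mul_sum, Finset.sum_mul]
            exact Finset.sum_congr rfl fun j _ => by ring
        _ ≤ ∑ j ∈ Finset.range (k + 1), Cst j * x ^ (μ - (j : ℝ) * ε) := by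
            refine Finset.sum_le_sum fun j _ => ?_
            have hR : 0 ≤ (k.choose j : ℝ) * A ^ (k - j) * B ^ l * M ^ (m - μ) :=
              mul_nonneg (mul_nonneg (mul_nonneg (Nat.cast_nonneg _) (pow_nonneg hA0 _))
                (pow_nonneg hB0 _)) (Real.rpow_nonneg hM.le _)
            calc (x ^ μ * Real.log (M / x) ^ j) *
                  ((k.choose j : ℝ) * A ^ (k - j) * B ^ l * M ^ (m - μ))
                ≤ (ε⁻¹ ^ j * M ^ ((j : ℝ) * ε) * x ^ (μ - (j : ℝ) * ε)) *
                  ((k.choose j : ℝ) * A ^ (k - j) * B ^ l * M ^ (m - μ)) :=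
                  mul_le_mul_of_nonneg_right (hkey j) hR
              _ = Cst j * x ^ (μ - (j : ℝ) * ε) := by simp only [hCstdef]; ring
    have hppos : ∀ j : ℕ, j ≤ k → -1 < μ - (j : ℝ) * ε := by
      intro j hj
      have := hjε j hj
      linarith
    have hint : ∀ j ∈ Finset.range (k + 1),
        MeasureTheory.IntegrableOn (fun x => Cst j * x ^ (μ - (j : ℝ) * ε))
          (Set.Ioc a₀ a₁) := by
      intro j hj
      have h := (intervalIntegral.intervalIntegrable_rpow'
        (hppos j (Nat.lt_succ_iff.mp (Finset.mem_range.mp hj))) (a := a₀) (b := a₁)).const_mul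
        (Cst j)
      exact h.1
    rw [intervalIntegral.integral_of_le h01]
    calc ∫ x in Set.Ioc a₀ a₁, max x b ^ m * lnp (K / x) ^ k * lnp (x / L) ^ l
        ≤ ∫ x in Set.Ioc a₀ a₁, ∑ j ∈ Finset.range (k + 1),
            Cst j * x ^ (μ - (j : ℝ) * ε) := by
          refine MeasureTheory.integral_mono_of_nonneg ?_
            (MeasureTheory.integrable_finset_sum _ hint) ?_
          · exact Filter.Eventually.of_forall fun x =>
              mul_nonneg (mul_nonneg (Real.rpow_nonneg (le_max_of_le_right hb) _)
                (pow_nonneg (lnp_nonneg _) _)) (pow_nonneg (lnp_nonneg _) _)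
          · exact (MeasureTheory.ae_restrict_iff' measurableSet_Ioc).mpr
              (Filter.Eventually.of_forall hpt)
      _ = ∑ j ∈ Finset.range (k + 1), Cst j * ∫ x in Set.Ioc a₀ a₁,
            x ^ (μ - (j : ℝ) * ε) := by
          rw [MeasureTheory.integral_finset_sum _ hint]
          exact Finset.sum_congr rfl fun j _ => MeasureTheory.integral_const_mul _ _
      _ ≤ ∑ j ∈ Finset.range (k + 1), Cst j * (M ^ (μ - (j : ℝ) * ε + 1) * (2 / (μ + 1))) := by
          refine Finset.sum_le_sum fun j hj => mul_le_mul_of_nonneg_left ?_ (hCst0 j)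
          have hjk : j ≤ k := Nat.lt_succ_iff.mp (Finset.mem_range.mp hj)
          have hp : -1 < μ - (j : ℝ) * ε := hppos j hjk
          have hp1 : (μ + 1) / 2 ≤ μ - (j : ℝ) * ε + 1 := by
            have := hjε j hjk; linarith
          have hp1pos : 0 < μ - (j : ℝ) * ε + 1 := by linarith
          rw [← intervalIntegral.integral_of_le h01, integral_rpow (Or.inl hp)]
          have h1 : a₁ ^ (μ - (j : ℝ) * ε + 1) - a₀ ^ (μ - (j : ℝ) * ε + 1) ≤
              M ^ (μ - (j : ℝ) * ε + 1) := by
            have hh := Real.rpow_nonneg ha₀ (μ - (j : ℝ) * ε + 1)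
            have h2 := Real.rpow_le_rpow (le_trans ha₀ h01) ha₁M hp1pos.le
            linarith
          calc (a₁ ^ (μ - (j : ℝ) * ε + 1) - a₀ ^ (μ - (j : ℝ) * ε + 1)) /
                (μ - (j : ℝ) * ε + 1)
              ≤ M ^ (μ - (j : ℝ) * ε + 1) / (μ - (j : ℝ) * ε + 1) :=
                (div_le_div_iff_of_pos_right hp1pos).mpr h1
            _ ≤ M ^ (μ - (j : ℝ) * ε + 1) * (2 / (μ + 1)) := by
                rw [div_eq_mul_inv]
                refine mul_le_mul_of_nonneg_left ?_ (Real.rpow_nonneg hM.le _)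
                rw [inv_eq_one_div, div_le_div_iff₀ hp1pos hμ1]
                linarith
      _ = M ^ (m + 1) * ∑ j ∈ Finset.range (k + 1), cf j * A ^ (k - j) * B ^ l := by
          rw [Finset.mul_sum]
          refine Finset.sum_congr rfl fun j hj => ?_
          have hMe : M ^ ((j : ℝ) * ε) * M ^ (m - μ) * M ^ (μ - (j : ℝ) * ε + 1) =
              M ^ (m + 1) := by
            rw [← Real.rpow_add hM, ← Real.rpow_add hM]
            congr 1; ring
          calc Cst j * (M ^ (μ - (j : ℝ) * ε + 1) * (2 / (μ + 1)))
              = (M ^ ((j : ℝ) * ε) * M ^ (m - μ) * M ^ (μ - (j : ℝ) * ε + 1)) *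
                ((k.choose j : ℝ) * ε⁻¹ ^ j * (2 / (μ + 1)) * A ^ (k - j) * B ^ l) := by
                simp only [hCstdef]; ring
            _ = M ^ (m + 1) * (cf j * A ^ (k - j) * B ^ l) := by
                rw [hMe]
end

section
/- Let n ∈ ℕ, let m : Fin n → ℝ, let α > 0, and let f : ℝ⁴ → ℝ be a nonnegative measurable function such that ∫_{ℝ⁴} e^{−α'‖x‖²} f(x) dx < ∞ for every α' > 0. Then there exists a constant c > 0 (depending only on n, m, α and f) such that for all vectors a : Fin n → ℝ⁴ and all reals β : Fin n → ℝ with β_i ≥ 1 for every i, one has ∫_{ℝ⁴} e^{−α‖x‖²} f(x) ∏_{i=1}^n max(‖x + a_i‖, β_i)^{m_i} dx ≤ c · ∏_{i=1}^n max(‖a_i‖, β_i)^{m_i}. -/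
open MeasureTheory

lemma factor_bound (x a : E4) (b mi : ℝ) (hb : 1 ≤ b) :
    max ‖x + a‖ b ^ mi ≤ (1 + ‖x‖) ^ |mi| * max ‖a‖ b ^ mi := by
  set t : ℝ := 1 + ‖x‖ with ht
  have hxnn : (0:ℝ) ≤ ‖x‖ := norm_nonneg x
  have ht1 : 1 ≤ t := by simp [ht]
  have htpos : 0 < t := lt_of_lt_of_le one_pos ht1
  set u : ℝ := max ‖x + a‖ b with hu
  set v : ℝ := max ‖a‖ b with hv
  have hupos : 0 < u := lt_of_lt_of_le one_pos (le_max_of_le_right hb)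
  have hvpos : 0 < v := lt_of_lt_of_le one_pos (le_max_of_le_right hb)
  have hv1 : 1 ≤ v := le_max_of_le_right hb
  have hu1 : 1 ≤ u := le_max_of_le_right hb
  have huv : u ≤ t * v := by
    apply max_le
    · have h1 : ‖x + a‖ ≤ ‖x‖ + ‖a‖ := norm_add_le x a
      have h2 : ‖a‖ ≤ v := le_max_left _ _
      nlinarith
    · nlinarith [le_max_right ‖a‖ b]
  have hvu : v ≤ t * u := by
    apply max_le
    · have h1 : ‖a‖ ≤ ‖x + a‖ + ‖x‖ := by
        have := norm_add_le (x + a) (-x)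
        simpa [add_assoc] using this
      have h2 : ‖x + a‖ ≤ u := le_max_left _ _
      nlinarith
    · nlinarith [le_max_right ‖x + a‖ b]
  rcases le_or_gt 0 mi with hm | hm
  · rw [abs_of_nonneg hm]
    calc u ^ mi ≤ (t * v) ^ mi := Real.rpow_le_rpow hupos.le huv hm
    _ = t ^ mi * v ^ mi := Real.mul_rpow htpos.le hvpos.le
  · rw [abs_of_neg hm]
    set p : ℝ := -mi with hp
    have hppos : 0 < p := by simp [hp]; linarith
    have key : v ^ p ≤ t ^ p * u ^ p := by
      calc v ^ p ≤ (t * u) ^ p := Real.rpow_le_rpow hvpos.le hvu hppos.le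
      _ = t ^ p * u ^ p := Real.mul_rpow htpos.le hupos.le
    have hmi : mi = -p := by simp [hp]
    rw [hmi, Real.rpow_neg hupos.le, Real.rpow_neg hvpos.le]
    have hupp : 0 < u ^ p := Real.rpow_pos_of_pos hupos p
    have hvpp : 0 < v ^ p := Real.rpow_pos_of_pos hvpos p
    have htpp : 0 < t ^ p := Real.rpow_pos_of_pos htpos p
    rw [show t ^ p * (v ^ p)⁻¹ = t ^ p / v ^ p by ring,
      show (u ^ p)⁻¹ = 1 / u ^ p by ring, div_le_div_iff₀ hupp hvpp]
    nlinarith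

theorem stmt6 (n : ℕ) (m : Fin n → ℝ) (α : ℝ) (hα : 0 < α) (f : E4 → ℝ)
    (hf : Measurable f) (hfnn : ∀ x, 0 ≤ f x)
    (hfint : ∀ α' : ℝ, 0 < α' →
      Integrable fun x : E4 => Real.exp (-α' * ‖x‖ ^ 2) * f x) :
    ∃ c > 0, ∀ (a : Fin n → E4) (β : Fin n → ℝ), (∀ i, 1 ≤ β i) →
      ∫ x : E4, Real.exp (-α * ‖x‖ ^ 2) * f x * ∏ i, max ‖x + a i‖ (β i) ^ m i ≤
        c * ∏ i, max ‖a i‖ (β i) ^ m i := by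
  set M : ℝ := ∑ i, |m i| with hM
  have hMnn : 0 ≤ M := Finset.sum_nonneg fun i _ => abs_nonneg _
  set K : ℝ := Real.exp (M ^ 2 / (2 * α)) with hK
  have hKpos : 0 < K := Real.exp_pos _
  set I : ℝ := ∫ x : E4, Real.exp (-(α / 2) * ‖x‖ ^ 2) * f x with hI
  have hInn : 0 ≤ I := integral_nonneg fun x => mul_nonneg (Real.exp_pos _).le (hfnn x)
  refine ⟨K * I + 1, by positivity, fun a β hβ => ?_⟩
  set P : ℝ := ∏ i, max ‖a i‖ (β i) ^ m i with hP
  have hPnn : 0 ≤ P :=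
    Finset.prod_nonneg fun i _ => Real.rpow_nonneg (le_trans zero_le_one (le_max_of_le_right (hβ i))) _
  -- pointwise bound
  have hpt : ∀ x : E4, Real.exp (-α * ‖x‖ ^ 2) * f x * ∏ i, max ‖x + a i‖ (β i) ^ m i ≤
      (K * P) * (Real.exp (-(α / 2) * ‖x‖ ^ 2) * f x) := by
    intro x
    have hxnn : (0:ℝ) ≤ ‖x‖ := norm_nonneg x
    have hprod : (∏ i, max ‖x + a i‖ (β i) ^ m i) ≤
        (1 + ‖x‖) ^ M * P := by
      have step : (∏ i, max ‖x + a i‖ (β i) ^ m i) ≤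
          ∏ i, ((1 + ‖x‖) ^ |m i| * max ‖a i‖ (β i) ^ m i) := by
        apply Finset.prod_le_prod
        · intro i _
          exact Real.rpow_nonneg (le_trans zero_le_one (le_max_of_le_right (hβ i))) _
        · intro i _
          exact factor_bound x (a i) (β i) (m i) (hβ i)
      calc (∏ i, max ‖x + a i‖ (β i) ^ m i)
          ≤ ∏ i, ((1 + ‖x‖) ^ |m i| * max ‖a i‖ (β i) ^ m i) := step
        _ = (∏ i, (1 + ‖x‖) ^ |m i|) * P := Finset.prod_mul_distrib
        _ = (1 + ‖x‖) ^ M * P := by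
            rw [hM, Real.rpow_sum_of_pos (by positivity) _ _]
    have hexp : (1 + ‖x‖) ^ M ≤ K * Real.exp ((α / 2) * ‖x‖ ^ 2) := by
      have h1 : (1 + ‖x‖ : ℝ) ≤ Real.exp ‖x‖ := by
        have := Real.add_one_le_exp ‖x‖; linarith
      have h2 : (1 + ‖x‖) ^ M ≤ Real.exp ‖x‖ ^ M :=
        Real.rpow_le_rpow (by positivity) h1 hMnn
      have h3 : Real.exp ‖x‖ ^ M = Real.exp (‖x‖ * M) := (Real.exp_mul _ _).symm
      have h4 : ‖x‖ * M ≤ M ^ 2 / (2 * α) + (α / 2) * ‖x‖ ^ 2 := by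
        have := sq_nonneg (α * ‖x‖ - M)
        rw [div_add' _ _ _ (by positivity), le_div_iff₀ (by positivity)]
        nlinarith
      calc (1 + ‖x‖) ^ M ≤ Real.exp (‖x‖ * M) := by rw [← h3]; exact h2
        _ ≤ Real.exp (M ^ 2 / (2 * α) + (α / 2) * ‖x‖ ^ 2) := Real.exp_le_exp.mpr h4
        _ = K * Real.exp ((α / 2) * ‖x‖ ^ 2) := by rw [hK, Real.exp_add]
    have hexps : Real.exp (-α * ‖x‖ ^ 2) * Real.exp ((α / 2) * ‖x‖ ^ 2) =
        Real.exp (-(α / 2) * ‖x‖ ^ 2) := by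
      rw [← Real.exp_add]; ring_nf
    have hfx := hfnn x
    calc Real.exp (-α * ‖x‖ ^ 2) * f x * ∏ i, max ‖x + a i‖ (β i) ^ m i
        ≤ Real.exp (-α * ‖x‖ ^ 2) * f x * ((1 + ‖x‖) ^ M * P) := by
          apply mul_le_mul_of_nonneg_left hprod (by positivity)
      _ ≤ Real.exp (-α * ‖x‖ ^ 2) * f x * ((K * Real.exp ((α / 2) * ‖x‖ ^ 2)) * P) := by
          apply mul_le_mul_of_nonneg_left (mul_le_mul_of_nonneg_right hexp hPnn) (by positivity)
      _ = (K * P) * ((Real.exp (-α * ‖x‖ ^ 2) * Real.exp ((α / 2) * ‖x‖ ^ 2)) * f x) := by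
          ring
      _ = (K * P) * (Real.exp (-(α / 2) * ‖x‖ ^ 2) * f x) := by rw [hexps]
  have hint : Integrable (fun x : E4 => (K * P) * (Real.exp (-(α / 2) * ‖x‖ ^ 2) * f x)) :=
    (hfint (α / 2) (by positivity)).const_mul _
  have hmono : (∫ x : E4, Real.exp (-α * ‖x‖ ^ 2) * f x * ∏ i, max ‖x + a i‖ (β i) ^ m i) ≤
      ∫ x : E4, (K * P) * (Real.exp (-(α / 2) * ‖x‖ ^ 2) * f x) := by
    apply integral_mono_of_nonneg
    · filter_upwards with x
      exact mul_nonneg (mul_nonneg (Real.exp_pos _).le (hfnn x))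
        (Finset.prod_nonneg fun i _ =>
          Real.rpow_nonneg (le_trans zero_le_one (le_max_of_le_right (hβ i))) _)
    · exact hint
    · filter_upwards with x using hpt x
  calc (∫ x : E4, Real.exp (-α * ‖x‖ ^ 2) * f x * ∏ i, max ‖x + a i‖ (β i) ^ m i)
      ≤ ∫ x : E4, (K * P) * (Real.exp (-(α / 2) * ‖x‖ ^ 2) * f x) := hmono
    _ = (K * P) * I := by rw [hI, integral_const_mul]
    _ ≤ (K * I + 1) * P := by nlinarith
end
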